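/- Let X be a complete length space and p ∈ X. Suppose there exist positive numbers L, N₀ and k > 1 such that ρ_p(L) < ∞ and such that for all r > N₀ the natural inclusion-induced map G(p, L, kr) → G(p, r, kr) is an isomorphism. Then there exists R₀ > 0 such that for all r > R₀ the natural inclusion-induced map G(p, r, kr) → π₁(X, p) is an isomorphism. -/

import Mathlib

open Metric unitInterval CategoryTheory
open scoped FundamentalGroupoid ENNReal Manifold

universe u

noncomputable section

/-- The length of a path in a pseudo-emetric space, as the total variation of the
parametrization. -/
def pathLength {X : Type u} [PseudoEMetricSpace X] {x y : X} (γ : Path x y) : ℝ≥0∞ :=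
  eVariationOn γ Set.univ

/-- A (pseudo-e)metric space is a *length space* if the distance between any two points is
the infimum of the lengths of paths joining them. -/
def IsLengthSpace (X : Type u) [PseudoEMetricSpace X] : Prop :=
  ∀ x y : X, edist x y = ⨅ γ : Path x y, pathLength γ

/-- Two loops are homotopic (rel endpoints) *within* the set `S` if there is a path homotopy
between them whose image is contained in `S`. -/
def HomotopicIn {X : Type u} [TopologicalSpace X] {x y : X} (γ₁ γ₂ : Path x y) (S : Set X) :
    Prop :=
  ∃ H : Path.Homotopy γ₁ γ₂, ∀ z : I × I, H z ∈ S

/-- A loop is nullhomotopic within the set `S`. -/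
def NullHomotopicIn {X : Type u} [TopologicalSpace X] {x : X} (γ : Path x x) (S : Set X) :
    Prop :=
  HomotopicIn γ (Path.refl x) S

/-- The homomorphism on fundamental groups induced by a continuous map. -/
def indHom {X Y : Type u} [TopologicalSpace X] [TopologicalSpace Y]
    (f : C(X, Y)) (x : X) : FundamentalGroup X x →* FundamentalGroup Y (f x) :=
  Functor.mapEnd (FundamentalGroupoid.mk x)
    (πₘ (show TopCat.of X ⟶ TopCat.of Y from TopCat.ofHom f))

/-- The class of a loop in the fundamental group. -/
def pathClass {X : Type u} [TopologicalSpace X] {x : X} (γ : Path x x) :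
    FundamentalGroup X x :=
  @FundamentalGroup.fromPath (TopCat.of X) _ x ⟦γ⟧

/-- The basepoint `p` as a point of the closed ball `B̄_p(r)`. -/
def pcb {X : Type u} [MetricSpace X] (p : X) {r : ℝ} (h0 : 0 ≤ r) : closedBall p r :=
  ⟨p, mem_closedBall_self h0⟩

/-- The basepoint `p` as a point of the open ball `B_p(R)`. -/
def ctr {X : Type u} [MetricSpace X] (p : X) {R : ℝ} (hR : 0 < R) : ball p R :=
  ⟨p, mem_ball_self hR⟩

/-- The inclusion of the closed ball `B̄_p(r)` into the open ball `B_p(R)`, `r < R`. -/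
def cbInclusion {X : Type u} [MetricSpace X] (p : X) {r R : ℝ} (h : r < R) :
    C(closedBall p r, ball p R) :=
  ⟨fun z => ⟨z.1, mem_ball.mpr (lt_of_le_of_lt (mem_closedBall.mp z.2) h)⟩,
    Continuous.subtype_mk continuous_subtype_val _⟩

/-- The geometric semi-local fundamental group `G(p,r,R)`: the image of
`π₁(B̄_p(r), p) → π₁(B_p(R), p)`, as a subgroup of `π₁(B_p(R), p)`. -/
def G {X : Type u} [MetricSpace X] (p : X) {r R : ℝ} (h0 : 0 ≤ r) (hrR : r < R) :
    Subgroup (FundamentalGroup (ball p R) (ctr p (h0.trans_lt hrR))) :=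
  (indHom (cbInclusion p hrR) (pcb p h0)).range

/-- The homomorphism `π₁(B_p(R), p) → π₁(X, p)` induced by inclusion. -/
def toAmb {X : Type u} [MetricSpace X] (p : X) {R : ℝ} (hR : 0 < R) :
    FundamentalGroup (ball p R) (ctr p hR) →* FundamentalGroup X p :=
  indHom ⟨Subtype.val, continuous_subtype_val⟩ (ctr p hR)

/-- The homomorphism `π₁(B̄_p(r), p) → π₁(X, p)` induced by inclusion. -/
def cbToAmb {X : Type u} [MetricSpace X] (p : X) {r : ℝ} (h0 : 0 ≤ r) :
    FundamentalGroup (closedBall p r) (pcb p h0) →* FundamentalGroup X p :=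
  indHom ⟨Subtype.val, continuous_subtype_val⟩ (pcb p h0)

end


noncomputable section Aux

attribute [local instance] Path.Homotopic.setoid

private lemma aut_ext' {Y : Type u} [TopologicalSpace Y] {y : Y}
    {g h : FundamentalGroup Y y} (H : g = h) : g = h := H

private lemma exists_pathClass_eq {Y : Type u} [TopologicalSpace Y] {y : Y}
    (g : FundamentalGroup Y y) : ∃ γ : Path y y, pathClass γ = g := by
  obtain ⟨γ, hγ⟩ := Quotient.exists_rep (g : Path.Homotopic.Quotient y y)
  exact ⟨γ, aut_ext' hγ⟩

private lemma pathClass_eq_one_iff {Y : Type u} [TopologicalSpace Y] {y : Y} (γ : Path y y) :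
    pathClass γ = 1 ↔ γ.Homotopic (Path.refl y) := by
  constructor
  · intro h
    have h2 : (pathClass γ) = (1 : FundamentalGroup Y y) := h
    have h3 : (⟦γ⟧ : Path.Homotopic.Quotient y y) = ⟦Path.refl y⟧ := h2
    exact Quotient.exact h3
  · intro h
    refine aut_ext' ?_
    show (⟦γ⟧ : Path.Homotopic.Quotient y y) = 𝟙 (FundamentalGroupoid.mk y)
    rw [FundamentalGroupoid.id_eq_path_refl]
    exact Quotient.sound h

private lemma indHom_pathClass {Y Z : Type u} [TopologicalSpace Y] [TopologicalSpace Z]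
    (f : C(Y, Z)) (y : Y) (γ : Path y y) :
    indHom f y (pathClass γ) = pathClass (γ.map f.continuous) := by
  refine aut_ext' ?_
  show (πₘ (TopCat.ofHom f : TopCat.of Y ⟶ TopCat.of Z)).map ⟦γ⟧
      = (⟦γ.map f.continuous⟧ : Path.Homotopic.Quotient (f y) (f y))
  rfl

/-- Lift a loop into a subset containing its image. -/
private def liftPath {Y : Type u} [TopologicalSpace Y] {y : Y} (γ : Path y y) {S : Set Y}
    (hy : y ∈ S) (h : ∀ t, γ t ∈ S) : Path (⟨y, hy⟩ : S) ⟨y, hy⟩ where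
  toFun t := ⟨γ t, h t⟩
  continuous_toFun := γ.continuous.subtype_mk _
  source' := Subtype.ext γ.source
  target' := Subtype.ext γ.target

private lemma pathClass_liftPath_eq_one {Y : Type u} [TopologicalSpace Y] {y : Y}
    {γ : Path y y} {S T : Set Y} (hy : y ∈ S) (hγ : ∀ t, γ t ∈ S) (hTS : T ⊆ S)
    (h : NullHomotopicIn γ T) : pathClass (liftPath γ hy hγ) = 1 := by
  obtain ⟨H, hH⟩ := h
  rw [pathClass_eq_one_iff]
  refine ⟨⟨⟨⟨fun z => ⟨H z, hTS (hH z)⟩, H.continuous.subtype_mk _⟩, ?_, ?_⟩, ?_⟩⟩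
  · intro t; exact Subtype.ext (H.map_zero_left t)
  · intro t; exact Subtype.ext (H.map_one_left t)
  · intro t z hz; exact Subtype.ext (H.prop' t z hz)

private lemma toAmb_pathClass {X : Type u} [MetricSpace X] (p : X) {R : ℝ} (hR : 0 < R)
    (β : Path (ctr p hR) (ctr p hR)) :
    toAmb p hR (pathClass β) = pathClass (β.map continuous_subtype_val) :=
  indHom_pathClass _ _ _

end Aux

set_option maxHeartbeats 1000000

theorem stmt6 {X : Type u} [MetricSpace X] [CompleteSpace X] (hlen : IsLengthSpace X)
    (p : X) (L N₀ k : ℝ) (hL : 0 < L) (hN₀ : 0 < N₀) (hk : 1 < k)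
    (hρ : ∃ R > 0, ∀ γ : Path p p, (∀ t, γ t ∈ closedBall p L) →
      γ.Homotopic (Path.refl p) → NullHomotopicIn γ (ball p R))
    (hiso : ∀ r, ∀ hr : N₀ < r, ∀ hLkr : L < k * r,
      G p hL.le hLkr = G p (hN₀.le.trans hr.le) (by nlinarith : r < k * r)) :
    ∃ R₀ > 0, ∀ r, R₀ < r → ∀ h0r : 0 < r,
      Function.Bijective ((toAmb p (h0r.trans (by nlinarith : r < k * r))).comp
        (G p h0r.le (by nlinarith : r < k * r)).subtype) := by
  obtain ⟨R, hRpos, hρ'⟩ := hρ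
  refine ⟨max (max N₀ L) R, by positivity, ?_⟩
  intro r hrR₀ h0r
  have hN₀r : N₀ < r := ((le_max_left N₀ L).trans (le_max_left _ R)).trans_lt hrR₀
  have hLr : L < r := ((le_max_right N₀ L).trans (le_max_left _ R)).trans_lt hrR₀
  have hRr : R < r := (le_max_right _ R).trans_lt hrR₀
  have hrkr : r < k * r := by nlinarith
  have hLkr : L < k * r := hLr.trans hrkr
  have h0kr : 0 < k * r := h0r.trans hrkr
  constructor
  · rw [injective_iff_map_eq_one]
    intro a ha
    simp only [MonoidHom.comp_apply, Subgroup.coe_subtype] at ha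
    have hmem : (a : FundamentalGroup (ball p (k * r)) (ctr p h0kr)) ∈ G p hL.le hLkr := by
      rw [hiso r hN₀r hLkr]; exact a.2
    obtain ⟨h, hh⟩ := hmem
    obtain ⟨α', rfl⟩ := exists_pathClass_eq h
    have hh' : (a : FundamentalGroup (ball p (k * r)) (ctr p h0kr))
        = pathClass (α'.map (cbInclusion p hLkr).continuous) :=
      hh.symm.trans (indHom_pathClass _ _ _)
    set α : Path p p := α'.map continuous_subtype_val with hα
    have hcomp : ((α'.map (cbInclusion p hLkr).continuous).map continuous_subtype_val : Path p p)
        = α := by ext t; rfl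
    have hone : pathClass α = 1 := by
      rw [← hcomp]
      rw [hh'] at ha
      erw [toAmb_pathClass] at ha
      exact ha
    have hαL : ∀ t, α t ∈ closedBall p L := fun t => (α' t).2
    have hnull : NullHomotopicIn α (ball p R) :=
      hρ' α hαL ((pathClass_eq_one_iff α).mp hone)
    have hαkr : ∀ t, α t ∈ ball p (k * r) := fun t =>
      mem_ball.mpr ((mem_closedBall.mp (hαL t)).trans_lt hLkr)
    have hlift : (α'.map (cbInclusion p hLkr).continuous)
        = liftPath α (mem_ball_self h0kr) hαkr := by ext t; rfl
    have : (a : FundamentalGroup (ball p (k * r)) (ctr p h0kr)) = 1 := by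
      rw [hh', hlift]
      exact pathClass_liftPath_eq_one _ _ (ball_subset_ball (hRr.trans hrkr).le) hnull
    exact Subtype.ext this
  · intro g
    obtain ⟨γ, hγ⟩ := exists_pathClass_eq g
    obtain ⟨s₀, hs₀⟩ := (isCompact_range γ.continuous).isBounded.subset_closedBall p
    set s : ℝ := max s₀ r + 1 with hs
    have hrs : r < s := by simp [hs]; nlinarith [le_max_right s₀ r]
    have h0s : 0 < s := h0r.trans hrs
    have hN₀s : N₀ < s := hN₀r.trans hrs
    have hsks : s < k * s := by nlinarith
    have hLks : L < k * s := (hLr.trans hrs).trans hsks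
    have hγs : ∀ t, γ t ∈ closedBall p s := fun t =>
      closedBall_subset_closedBall (by nlinarith [le_max_left s₀ r] : s₀ ≤ s)
        (hs₀ (Set.mem_range_self t))
    set γ' : Path (pcb p h0s.le) (pcb p h0s.le) := liftPath γ (mem_closedBall_self h0s.le) hγs
    have hmem2 : indHom (cbInclusion p hsks) (pcb p h0s.le) (pathClass γ')
        ∈ G p (hN₀.le.trans hN₀s.le) hsks := ⟨pathClass γ', rfl⟩
    rw [← hiso s hN₀s hLks] at hmem2
    obtain ⟨h, hh⟩ := hmem2
    obtain ⟨α', rfl⟩ := exists_pathClass_eq h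
    set α : Path p p := α'.map continuous_subtype_val with hα
    have hαL : ∀ t, α t ∈ closedBall p L := fun t => (α' t).2
    -- apply toAmb (to π₁ X) to both sides of hh
    have hXeq : pathClass α = g := by
      have h1 := congrArg (toAmb p (h0s.trans hsks)) hh
      rw [indHom_pathClass, indHom_pathClass] at h1
      erw [toAmb_pathClass, toAmb_pathClass] at h1
      have e1 : ((α'.map (cbInclusion p hLks).continuous).map continuous_subtype_val : Path p p)
          = α := by ext t; rfl
      have e2 : ((γ'.map (cbInclusion p hsks).continuous).map continuous_subtype_val : Path p p)
          = γ := by ext t; rfl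
      exact (congrArg pathClass e1).symm.trans (h1.trans ((congrArg pathClass e2).trans hγ))
    -- the witness in G p r (k r)
    have hαr : ∀ t, α t ∈ closedBall p r := fun t =>
      closedBall_subset_closedBall hLr.le (hαL t)
    set α'' : Path (pcb p h0r.le) (pcb p h0r.le) :=
      liftPath α (mem_closedBall_self h0r.le) hαr
    refine ⟨⟨indHom (cbInclusion p hrkr) (pcb p h0r.le) (pathClass α''),
      ⟨pathClass α'', rfl⟩⟩, ?_⟩
    simp only [MonoidHom.comp_apply, Subgroup.coe_subtype]
    rw [indHom_pathClass]
    erw [toAmb_pathClass]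
    have e3 : ((α''.map (cbInclusion p hrkr).continuous).map continuous_subtype_val : Path p p)
        = α := by ext t; rfl
    exact (congrArg pathClass e3).trans hXeq
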